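/- Let X be a compact Hausdorff space, A a commutative Banach algebra, and σ ∈ Hom(A) with dense range. If A is σ-weakly amenable, then C(X,A) is σ̃-weakly amenable, where σ̃(f) = σ ∘ f. -/

import Mathlib

/-- `σ`-weak amenability of a Banach algebra `B`: every bounded `σ`-derivation
`D : B → B*` into the dual bimodule `B*` (with actions `(b·Λ)(x) = Λ(x b)`,
`(Λ·b)(x) = Λ(b x)`) is `σ`-inner. -/
def SigmaWeaklyAmenable (B : Type u) [NonUnitalNormedRing B] [NormedSpace ℂ B]
    (s : B → B) : Prop :=
  ∀ D : B →L[ℂ] (B →L[ℂ] ℂ),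
    (∀ a b x, D (a * b) x = D a (s b * x) + D b (x * s a)) →
    ∃ Λ : B →L[ℂ] ℂ, ∀ a x, D a x = Λ (x * s a) - Λ (s a * x)

set_option linter.unusedSectionVars false
set_option maxHeartbeats 1000000

namespace Stmt19Aux
variable {X A : Type u} [TopologicalSpace X] [CompactSpace X] [T2Space X]
  [NonUnitalNormedRing A] [NormedSpace ℂ A] [IsScalarTower ℂ A A]
  [SMulCommClass ℂ A A]

noncomputable def pm (φ : C(X, ℂ)) (f : C(X, A)) : C(X, A) :=
  ⟨fun x => φ x • f x, (map_continuous φ).smul (map_continuous f)⟩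
@[simp] lemma pm_apply (φ : C(X, ℂ)) (f : C(X, A)) (x : X) : pm φ f x = φ x • f x := rfl
def cst (a : A) : C(X, A) := ContinuousMap.const X a
@[simp] lemma cst_apply (a : A) (x : X) : (cst a : C(X, A)) x = a := rfl
def cplx (ψ : C(X, ℝ)) : C(X, ℂ) :=
  ⟨fun x => (ψ x : ℂ), Complex.continuous_ofReal.comp (map_continuous ψ)⟩
@[simp] lemma cplx_apply (ψ : C(X, ℝ)) (x : X) : cplx ψ x = (ψ x : ℂ) := rfl
lemma cst_mul (a b : A) : (cst (a * b) : C(X, A)) = cst a * cst b := by ext x; simp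
lemma norm_cst_le (a : A) : ‖(cst a : C(X, A))‖ ≤ ‖a‖ :=
  (ContinuousMap.norm_le _ (norm_nonneg a)).mpr fun _ => le_rfl
lemma norm_pm_le (φ : C(X, ℂ)) (f : C(X, A)) : ‖pm φ f‖ ≤ ‖φ‖ * ‖f‖ := by
  refine (ContinuousMap.norm_le _ (by positivity)).mpr fun x => ?_
  rw [pm_apply, norm_smul]
  exact mul_le_mul (φ.norm_coe_le_norm x) (f.norm_coe_le_norm x) (norm_nonneg _) (norm_nonneg _)
lemma pm_sub_left (φ ψ : C(X, ℂ)) (f : C(X, A)) : pm (φ - ψ) f = pm φ f - pm ψ f := by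
  ext x; simp [sub_smul]
lemma pm_add_left (φ ψ : C(X, ℂ)) (f : C(X, A)) : pm (φ + ψ) f = pm φ f + pm ψ f := by
  ext x; simp [add_smul]
lemma pm_smul_left (r : ℂ) (φ : C(X, ℂ)) (f : C(X, A)) : pm (r • φ) f = r • pm φ f := by
  ext x; simp [mul_smul]
lemma pm_pm (φ ψ : C(X, ℂ)) (f : C(X, A)) : pm φ (pm ψ f) = pm (φ * ψ) f := by
  ext x; simp [mul_smul]
lemma pm_one (f : C(X, A)) : pm 1 f = f := by ext x; simp
lemma mulC (hcomm : ∀ a b : A, a * b = b * a) (f g : C(X, A)) : f * g = g * f := by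
  ext x; simp [hcomm]


lemma pm_add_right (φ : C(X, ℂ)) (f g : C(X, A)) : pm φ (f + g) = pm φ f + pm φ g := by
  ext x; simp

lemma pm_smul_right (r : ℂ) (φ : C(X, ℂ)) (f : C(X, A)) : pm φ (r • f) = r • pm φ f := by
  ext x; simp [smul_comm r]

/-- `cst` as a continuous linear map. -/
noncomputable def cstL : A →L[ℂ] C(X, A) :=
  LinearMap.mkContinuous
    { toFun := cst
      map_add' := fun a b => by ext x; simp
      map_smul' := fun r a => by ext x; simp }
    1 (fun a => by simpa using norm_cst_le (X := X) a)

@[simp] lemma cstL_apply (a : A) : (cstL (X := X) a) = cst a := rfl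

/-- `pm φ` as a continuous linear map. -/
noncomputable def pmL (φ : C(X, ℂ)) : C(X, A) →L[ℂ] C(X, A) :=
  LinearMap.mkContinuous
    { toFun := pm φ
      map_add' := pm_add_right φ
      map_smul' := fun r f => pm_smul_right r φ f }
    ‖φ‖ (fun f => norm_pm_le φ f)

@[simp] lemma pmL_apply (φ : C(X, ℂ)) (f : C(X, A)) : pmL φ f = pm φ f := rfl

open Set in
/-- partition-of-unity density: a continuous functional vanishing on all
`pm φ (cst b)` vanishes everywhere. -/
lemma dense_pm (Λ : C(X, A) →L[ℂ] ℂ)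
    (h : ∀ (φ : C(X, ℂ)) (b : A), Λ (pm φ (cst b)) = 0) (f : C(X, A)) : Λ f = 0 := by
  have happrox : ∀ ε : ℝ, 0 < ε → ‖Λ f‖ ≤ ‖Λ‖ * ε := by
    intro ε hε
    -- open cover
    set U : X → Set X := fun t => {s | ‖f s - f t‖ < ε} with hU
    have hUopen : ∀ t, IsOpen (U t) := fun t =>
      isOpen_lt (((map_continuous f).sub continuous_const).norm) continuous_const
    have hcover : (univ : Set X) ⊆ ⋃ t, U t := fun x _ =>
      mem_iUnion.2 ⟨x, by simp [hU, hε]⟩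
    obtain ⟨s, hs⟩ := isCompact_univ.elim_finite_subcover U hUopen hcover
    set ι := {t : X // t ∈ s}
    set V : ι → Set X := fun i => U i.1 with hV
    have hVcover : (univ : Set X) ⊆ ⋃ i, V i := by
      intro x hx
      have := hs hx
      rw [mem_iUnion₂] at this
      obtain ⟨t, ht, hxt⟩ := this
      exact mem_iUnion.2 ⟨⟨t, ht⟩, hxt⟩
    obtain ⟨p, hp⟩ := PartitionOfUnity.exists_isSubordinate_of_locallyFinite isClosed_univ
      V (fun i => hUopen i.1) (locallyFinite_of_finite V) hVcover
    set g : C(X, A) := ∑ i : ι, pm (cplx (p i)) (cst (f i.1)) with hg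
    have hΛg : Λ g = 0 := by
      rw [hg, map_sum]
      simp [h]
    have hnorm : ‖f - g‖ ≤ ε := by
      refine (ContinuousMap.norm_le _ hε.le).mpr fun x => ?_
      have hsum1 : ∑ i : ι, p i x = 1 := by
        have h1 := p.sum_eq_one (mem_univ x)
        rwa [finsum_eq_sum_of_fintype] at h1
      have hgx : g x = ∑ i : ι, ((p i x : ℂ)) • f i.1 := by
        rw [hg]
        simp
      have hfx : f x = ∑ i : ι, ((p i x : ℂ)) • f x := by
        rw [← Finset.sum_smul, ← Complex.ofReal_sum, hsum1]
        simp
      have : (f - g) x = ∑ i : ι, ((p i x : ℂ)) • (f x - f i.1) := by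
        rw [ContinuousMap.sub_apply, hgx]
        nth_rewrite 1 [hfx]
        rw [← Finset.sum_sub_distrib]
        exact Finset.sum_congr rfl fun i _ => (smul_sub _ _ _).symm
      rw [this]
      calc ‖∑ i : ι, ((p i x : ℂ)) • (f x - f i.1)‖
          ≤ ∑ i : ι, ‖((p i x : ℂ)) • (f x - f i.1)‖ := norm_sum_le _ _
        _ = ∑ i : ι, p i x * ‖f x - f i.1‖ := by
            refine Finset.sum_congr rfl fun i _ => ?_
            rw [norm_smul, Complex.norm_real, Real.norm_eq_abs,
              abs_of_nonneg (p.nonneg i x)]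
        _ ≤ ∑ i : ι, p i x * ε := by
            refine Finset.sum_le_sum fun i _ => ?_
            rcases eq_or_ne (p i x) 0 with h0 | h0
            · simp [h0]
            · refine mul_le_mul_of_nonneg_left ?_ (p.nonneg i x)
              have hx : x ∈ V i := (hp i) (subset_closure (by
                simpa [Function.mem_support] using h0))
              exact le_of_lt hx
        _ = ε := by rw [← Finset.sum_mul, hsum1, one_mul]
    calc ‖Λ f‖ = ‖Λ (f - g) + Λ g‖ := by rw [map_sub, hΛg, sub_zero, add_zero]
      _ = ‖Λ (f - g)‖ := by rw [hΛg, add_zero]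
      _ ≤ ‖Λ‖ * ‖f - g‖ := Λ.le_opNorm _
      _ ≤ ‖Λ‖ * ε := by gcongr
  by_contra hne
  have hpos : 0 < ‖Λ f‖ := norm_pos_iff.mpr hne
  have h1 := happrox (‖Λ f‖ / (‖Λ‖ + 1)) (by positivity)
  have h2 : ‖Λ‖ * (‖Λ f‖ / (‖Λ‖ + 1)) < ‖Λ f‖ := by
    rw [mul_div_assoc']
    rw [div_lt_iff₀ (by positivity)]
    nlinarith [norm_nonneg Λ]
  linarith



variable {σ : A →L[ℂ] A} {σt : C(X, A) →L[ℂ] C(X, A)}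
  {D : C(X, A) →L[ℂ] C(X, A) →L[ℂ] ℂ}

lemma sigma_t_cst (hσt : ∀ (f : C(X, A)) (x : X), σt f x = σ (f x)) (a : A) :
    σt (cst a) = cst (σ a) := by ext x; simp [hσt]
lemma sigma_t_pm (hσt : ∀ (f : C(X, A)) (x : X), σt f x = σ (f x)) (φ : C(X, ℂ)) (f : C(X, A)) :
    σt (pm φ f) = pm φ (σt f) := by ext x; simp [hσt, map_smul]

/-- a continuous functional on `A` vanishing on all products vanishes. -/
lemma prodZero
    (hkey : ∀ d : A →L[ℂ] A →L[ℂ] ℂ,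
      (∀ a b x, d (a * b) x = d a (σ b * x) + d b (x * σ a)) → ∀ a x, d a x = 0)
    (T : A →L[ℂ] ℂ) (hT : ∀ a b, T (a * b) = 0) : ∀ a, T a = 0 := by
  intro a
  have h := hkey (T.smulRight T) ?_ a a
  · simpa [mul_self_eq_zero] using h
  · intro a b x
    simp [hT, smul_eq_mul]


lemma lemZ (hcomm : ∀ a b : A, a * b = b * a)
    (hσt : ∀ (f : C(X, A)) (x : X), σt f x = σ (f x))
    (hD : ∀ a b x, D (a * b) x = D a (σt b * x) + D b (x * σt a))
    (hkey : ∀ d : A →L[ℂ] A →L[ℂ] ℂ,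
      (∀ a b x, d (a * b) x = d a (σ b * x) + d b (x * σ a)) → ∀ a x, d a x = 0)
    (g : C(X, A)) (a b : A) : D (cst a) (cst b * g) = 0 := by
  set mulg : A →L[ℂ] C(X, A) := ((ContinuousLinearMap.mul ℂ C(X, A)).flip g).comp cstL with hm
  set dZ : A →L[ℂ] A →L[ℂ] ℂ := ((D.comp cstL).flip.comp mulg).flip with hdz
  have happ : ∀ a b : A, dZ a b = D (cst a) (cst b * g) := fun _ _ => rfl
  have hder : ∀ a b x, dZ (a * b) x = dZ a (σ b * x) + dZ b (x * σ a) := by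
    intro a b x
    have e1 : (cst (σ b) : C(X, A)) * (cst x * g) = cst (σ b * x) * g := by
      ext t; simp [mul_assoc]
    have e2 : (cst x * g) * (cst (σ a) : C(X, A)) = cst (x * σ a) * g := by
      ext t
      simp only [ContinuousMap.mul_apply, cst_apply]
      rw [mul_assoc, hcomm (g t) (σ a), ← mul_assoc]
    simp only [happ]
    rw [cst_mul, hD, sigma_t_cst hσt, sigma_t_cst hσt, e1, e2]
  have h := hkey dZ hder a b
  rwa [happ] at h



section Es

lemma E1 (hcomm : ∀ a b : A, a * b = b * a)
    (hD : ∀ a b x, D (a * b) x = D a (σt b * x) + D b (x * σt a))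
    (F G H : C(X, A)) : D (F * G) H = D F (σt G * H) + D G (σt F * H) := by
  rw [hD F G H, mulC hcomm H (σt F)]

lemma E2 (hcomm : ∀ a b : A, a * b = b * a)
    (hσt : ∀ (f : C(X, A)) (x : X), σt f x = σ (f x))
    (hD : ∀ a b x, D (a * b) x = D a (σt b * x) + D b (x * σt a))
    (hZc : ∀ (a : A) (H : C(X, A)), D (cst a) H = 0)
    (F : C(X, A)) (c : A) (H : C(X, A)) :
    D (F * cst c) H = D F (cst (σ c) * H) := by
  rw [E1 hcomm hD, sigma_t_cst hσt, hZc, add_zero]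

lemma E2' (hcomm : ∀ a b : A, a * b = b * a)
    (hσt : ∀ (f : C(X, A)) (x : X), σt f x = σ (f x))
    (hD : ∀ a b x, D (a * b) x = D a (σt b * x) + D b (x * σt a))
    (hZc : ∀ (a : A) (H : C(X, A)), D (cst a) H = 0)
    (c : A) (F H : C(X, A)) :
    D (cst c * F) H = D F (cst (σ c) * H) := by
  rw [E1 hcomm hD, sigma_t_cst hσt, hZc, zero_add]

lemma qswap (hcomm : ∀ a b : A, a * b = b * a)
    (hσt : ∀ (f : C(X, A)) (x : X), σt f x = σ (f x))
    (hD : ∀ a b x, D (a * b) x = D a (σt b * x) + D b (x * σt a))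
    (hZc : ∀ (a : A) (H : C(X, A)), D (cst a) H = 0)
    (b c : A) (ψ : C(X, ℂ)) (K : C(X, A)) :
    D (pm ψ (cst c)) (cst (σ b) * K) = D (pm ψ (cst b)) (cst (σ c) * K) := by
  have h1 : pm ψ (cst b) * cst c = cst b * pm ψ (cst c) := by
    ext x
    simp only [ContinuousMap.mul_apply, pm_apply, cst_apply]
    rw [smul_mul_assoc, mul_smul_comm]
  have h2 := E2 hcomm hσt hD hZc (pm ψ (cst b)) c K
  have h3 := E2' hcomm hσt hD hZc b (pm ψ (cst c)) K
  rw [← h3, ← h1, h2]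

lemma qLeibniz (hcomm : ∀ a b : A, a * b = b * a)
    (hσt : ∀ (f : C(X, A)) (x : X), σt f x = σ (f x))
    (hD : ∀ a b x, D (a * b) x = D a (σt b * x) + D b (x * σt a))
    (hZc : ∀ (a : A) (H : C(X, A)), D (cst a) H = 0)
    (b c : A) (φ ψ : C(X, ℂ)) (H : C(X, A)) :
    D (pm (φ * ψ) (cst b)) (cst (σ c) * H)
      = D (pm φ (cst b)) (cst (σ c) * pm ψ H)
        + D (pm ψ (cst b)) (cst (σ c) * pm φ H) := by
  have idFG : pm φ (cst b) * pm ψ (cst c) = pm (φ * ψ) (cst (b * c)) := by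
    ext x
    simp only [ContinuousMap.mul_apply, pm_apply, cst_apply]
    rw [smul_mul_assoc, mul_smul_comm, smul_smul]
  have idσG : σt (pm ψ (cst c)) * H = cst (σ c) * pm ψ H := by
    rw [sigma_t_pm hσt, sigma_t_cst hσt]
    ext x
    simp only [ContinuousMap.mul_apply, pm_apply, cst_apply]
    rw [smul_mul_assoc, mul_smul_comm]
  have idσF : σt (pm φ (cst b)) * H = cst (σ b) * pm φ H := by
    rw [sigma_t_pm hσt, sigma_t_cst hσt]
    ext x
    simp only [ContinuousMap.mul_apply, pm_apply, cst_apply]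
    rw [smul_mul_assoc, mul_smul_comm]
  have idL : pm (φ * ψ) (cst (b * c)) = pm (φ * ψ) (cst b) * cst c := by
    ext x
    simp only [ContinuousMap.mul_apply, pm_apply, cst_apply]
    rw [smul_mul_assoc]
  have e := E1 hcomm hD (pm φ (cst b)) (pm ψ (cst c)) H
  rw [idFG, idσG, idσF, idL, E2 hcomm hσt hD hZc] at e
  rw [e, qswap hcomm hσt hD hZc b c ψ (pm φ H)]

lemma qpow (hcomm : ∀ a b : A, a * b = b * a)
    (hσt : ∀ (f : C(X, A)) (x : X), σt f x = σ (f x))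
    (hD : ∀ a b x, D (a * b) x = D a (σt b * x) + D b (x * σt a))
    (hZc : ∀ (a : A) (H : C(X, A)), D (cst a) H = 0)
    (b c : A) (u : C(X, ℂ)) (H : C(X, A)) : ∀ n : ℕ,
    D (pm (u ^ (n + 1)) (cst b)) (cst (σ c) * H)
      = ((n + 1 : ℕ) : ℂ) * D (pm u (cst b)) (cst (σ c) * pm (u ^ n) H) := by
  intro n
  induction n generalizing H with
  | zero => simp [pow_one, pow_zero, pm_one]
  | succ n ih =>
    have hsplit : u ^ (n + 2) = u * u ^ (n + 1) := by ring
    rw [hsplit, qLeibniz hcomm hσt hD hZc]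
    rw [ih (pm u H)]
    rw [pm_pm, ← pow_succ]
    push_cast
    ring

lemma qbound (MD : ℝ) (hMD : 0 ≤ MD)
    (hDb : ∀ F G : C(X, A), ‖D F G‖ ≤ MD * ‖F‖ * ‖G‖)
    (b c : A) (φ : C(X, ℂ)) (H : C(X, A)) :
    ‖D (pm φ (cst b)) (cst (σ c) * H)‖ ≤ MD * ‖b‖ * ‖σ c‖ * ‖H‖ * ‖φ‖ := by
  have h1 : ‖pm φ (cst b)‖ ≤ ‖φ‖ * ‖b‖ :=
    (norm_pm_le φ _).trans (by gcongr; exact norm_cst_le b)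
  have h2 : ‖cst (σ c) * H‖ ≤ ‖σ c‖ * ‖H‖ := by
    refine (norm_mul_le _ _).trans ?_
    gcongr
    exact norm_cst_le _
  calc ‖D (pm φ (cst b)) (cst (σ c) * H)‖
      ≤ MD * ‖pm φ (cst b)‖ * ‖cst (σ c) * H‖ := hDb _ _
    _ ≤ MD * (‖φ‖ * ‖b‖) * (‖σ c‖ * ‖H‖) := by
        have := mul_le_mul (mul_le_mul_of_nonneg_left h1 hMD) h2 (norm_nonneg _)
          (by positivity)
        simpa [mul_assoc] using this
    _ = MD * ‖b‖ * ‖σ c‖ * ‖H‖ * ‖φ‖ := by ring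

end Es

lemma zero_of_le_div (z : ℂ) (C : ℝ) (h : ∀ n : ℕ, ((n : ℝ) + 1) * ‖z‖ ≤ C) : z = 0 := by
  by_contra hz
  have hzpos : 0 < ‖z‖ := norm_pos_iff.mpr hz
  obtain ⟨n, hn⟩ := exists_nat_gt (C / ‖z‖)
  have h2 : C < ((n : ℝ) + 1) * ‖z‖ := by
    rw [div_lt_iff₀ hzpos] at hn
    nlinarith
  exact absurd (h n) (not_le.mpr h2)

lemma eq_zero_of_norm_le_eps (z : ℂ) (h : ∀ ε : ℝ, 0 < ε → ‖z‖ ≤ ε) : z = 0 := by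
  by_contra hz
  have hzpos : 0 < ‖z‖ := norm_pos_iff.mpr hz
  have := h (‖z‖ / 2) (by positivity)
  linarith

section Q2
variable {σ : A →L[ℂ] A} {σt : C(X, A) →L[ℂ] C(X, A)}
  {D : C(X, A) →L[ℂ] C(X, A) →L[ℂ] ℂ}

lemma qunit (hcomm : ∀ a b : A, a * b = b * a)
    (hσt : ∀ (f : C(X, A)) (x : X), σt f x = σ (f x))
    (hD : ∀ a b x, D (a * b) x = D a (σt b * x) + D b (x * σt a))
    (hZc : ∀ (a : A) (H : C(X, A)), D (cst a) H = 0)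
    (MD : ℝ) (hMD : 0 ≤ MD)
    (hDb : ∀ F G : C(X, A), ‖D F G‖ ≤ MD * ‖F‖ * ‖G‖)
    (b c : A) (u : C(X, ℂ)) (hu : ∀ x, ‖u x‖ = 1) (K : C(X, A)) :
    D (pm u (cst b)) (cst (σ c) * K) = 0 := by
  set v : C(X, ℂ) := star u with hvdef
  have hv : ∀ x, ‖v x‖ = 1 := fun x => by
    rw [hvdef, ContinuousMap.star_apply, norm_star, hu]
  have huv : u * v = 1 := by
    ext x
    simp only [ContinuousMap.mul_apply, ContinuousMap.one_apply, hvdef,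
      ContinuousMap.star_apply]
    have h1 : Complex.normSq (u x) = 1 := by
      rw [Complex.normSq_eq_norm_sq, hu x, one_pow]
    rw [Complex.star_def, Complex.mul_conj, h1, Complex.ofReal_one]
  have hK : ∀ n : ℕ, pm (u ^ n) (pm (v ^ n) K) = K := by
    intro n
    rw [pm_pm, ← mul_pow, huv, one_pow, pm_one]
  refine zero_of_le_div _ (MD * ‖b‖ * ‖σ c‖ * ‖K‖) ?_
  intro n
  have hpow := qpow hcomm hσt hD hZc b c u (pm (v ^ n) K) n
  rw [hK n] at hpow
  have hnu : ‖u ^ (n + 1)‖ ≤ 1 := by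
    refine (ContinuousMap.norm_le _ zero_le_one).mpr fun x => ?_
    rw [ContinuousMap.pow_apply, norm_pow, hu, one_pow]
  have hnK : ‖pm (v ^ n) K‖ ≤ ‖K‖ := by
    refine (ContinuousMap.norm_le _ (norm_nonneg K)).mpr fun x => ?_
    rw [pm_apply, norm_smul, ContinuousMap.pow_apply, norm_pow, hv, one_pow, one_mul]
    exact K.norm_coe_le_norm x
  have hb := qbound (σ := σ) MD hMD hDb b c (u ^ (n + 1)) (pm (v ^ n) K)
  calc ((n : ℝ) + 1) * ‖D (pm u (cst b)) (cst (σ c) * K)‖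
      = ‖((n + 1 : ℕ) : ℂ) * D (pm u (cst b)) (cst (σ c) * K)‖ := by
        rw [norm_mul, Complex.norm_natCast]
        push_cast
        ring
    _ = ‖D (pm (u ^ (n + 1)) (cst b)) (cst (σ c) * pm (v ^ n) K)‖ := by rw [hpow]
    _ ≤ MD * ‖b‖ * ‖σ c‖ * ‖pm (v ^ n) K‖ * ‖u ^ (n + 1)‖ := hb
    _ ≤ MD * ‖b‖ * ‖σ c‖ * ‖K‖ * 1 := by
        have hpre : 0 ≤ MD * ‖b‖ * ‖σ c‖ := by positivity
        exact mul_le_mul (mul_le_mul_of_nonneg_left hnK hpre) hnu (norm_nonneg _)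
          (by positivity)
    _ = MD * ‖b‖ * ‖σ c‖ * ‖K‖ := mul_one _

lemma qlin_sub (b c : A) (φ ρ : C(X, ℂ)) (H : C(X, A)) :
    D (pm (φ - ρ) (cst b)) (cst (σ c) * H)
      = D (pm φ (cst b)) (cst (σ c) * H) - D (pm ρ (cst b)) (cst (σ c) * H) := by
  rw [pm_sub_left, map_sub, ContinuousLinearMap.sub_apply]

lemma qlin_smul (b c : A) (r : ℂ) (φ : C(X, ℂ)) (H : C(X, A)) :
    D (pm (r • φ) (cst b)) (cst (σ c) * H)
      = r * D (pm φ (cst b)) (cst (σ c) * H) := by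
  rw [pm_smul_left, map_smul, ContinuousLinearMap.smul_apply, smul_eq_mul]

lemma qlin_add (b c : A) (φ ρ : C(X, ℂ)) (H : C(X, A)) :
    D (pm (φ + ρ) (cst b)) (cst (σ c) * H)
      = D (pm φ (cst b)) (cst (σ c) * H) + D (pm ρ (cst b)) (cst (σ c) * H) := by
  rw [pm_add_left, map_add, ContinuousLinearMap.add_apply]

lemma qreal (hcomm : ∀ a b : A, a * b = b * a)
    (hσt : ∀ (f : C(X, A)) (x : X), σt f x = σ (f x))
    (hD : ∀ a b x, D (a * b) x = D a (σt b * x) + D b (x * σt a))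
    (hZc : ∀ (a : A) (H : C(X, A)), D (cst a) H = 0)
    (MD : ℝ) (hMD : 0 ≤ MD)
    (hDb : ∀ F G : C(X, A), ‖D F G‖ ≤ MD * ‖F‖ * ‖G‖)
    (b c : A) (ψ : C(X, ℝ)) (H : C(X, A)) :
    D (pm (cplx ψ) (cst b)) (cst (σ c) * H) = 0 := by
  set B : ℝ := MD * ‖b‖ * ‖σ c‖ * ‖H‖ with hB
  have hB0 : 0 ≤ B := by positivity
  refine eq_zero_of_norm_le_eps _ fun ε hε => ?_
  set t : ℝ := min (1 / (‖ψ‖ + 1)) (ε / (B * ‖ψ‖ ^ 2 + 1)) with ht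
  have ht0 : 0 < t := lt_min (by positivity) (by positivity)
  have ht1 : t * ‖ψ‖ ≤ 1 := by
    have h1 : t ≤ 1 / (‖ψ‖ + 1) := min_le_left _ _
    have h2 : t * ‖ψ‖ ≤ (1 / (‖ψ‖ + 1)) * ‖ψ‖ := mul_le_mul_of_nonneg_right h1 (norm_nonneg ψ)
    have h3 : (1 / (‖ψ‖ + 1)) * ‖ψ‖ ≤ 1 := by
      rw [div_mul_eq_mul_div, one_mul, div_le_one (by positivity)]
      linarith [norm_nonneg ψ]
    linarith
  have ht2 : B * ‖ψ‖ ^ 2 * t ≤ ε := by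
    have h1 : t ≤ ε / (B * ‖ψ‖ ^ 2 + 1) := min_le_right _ _
    have h2 : B * ‖ψ‖ ^ 2 * t ≤ B * ‖ψ‖ ^ 2 * (ε / (B * ‖ψ‖ ^ 2 + 1)) := by
      have : (0:ℝ) ≤ B * ‖ψ‖ ^ 2 := by positivity
      exact mul_le_mul_of_nonneg_left h1 this
    have hle : B * ‖ψ‖ ^ 2 / (B * ‖ψ‖ ^ 2 + 1) ≤ 1 := by
      rw [div_le_one (by positivity)]
      linarith [sq_nonneg ‖ψ‖, mul_nonneg hB0 (sq_nonneg ‖ψ‖)]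
    have h3 : B * ‖ψ‖ ^ 2 * (ε / (B * ‖ψ‖ ^ 2 + 1)) ≤ ε := by
      calc B * ‖ψ‖ ^ 2 * (ε / (B * ‖ψ‖ ^ 2 + 1))
          = (B * ‖ψ‖ ^ 2 / (B * ‖ψ‖ ^ 2 + 1)) * ε := by ring
        _ ≤ 1 * ε := mul_le_mul_of_nonneg_right hle hε.le
        _ = ε := one_mul ε
    linarith
  set u : C(X, ℂ) := ⟨fun x => Complex.exp ((t * ψ x : ℝ) * Complex.I),
    Complex.continuous_exp.comp ((Complex.continuous_ofReal.comp
      (continuous_const.mul (map_continuous ψ))).mul continuous_const)⟩ with hudef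
  have huapp : ∀ x, u x = Complex.exp ((t * ψ x : ℝ) * Complex.I) := fun x => rfl
  have hu : ∀ x, ‖u x‖ = 1 := fun x => by
    rw [huapp, Complex.norm_exp_ofReal_mul_I]
  have hqu := qunit hcomm hσt hD hZc MD hMD hDb b c u hu H
  have hq1 : D (pm 1 (cst b)) (cst (σ c) * H) = 0 := by
    rw [pm_one]; exact hZc b _
  set w : C(X, ℂ) := (((t : ℂ) * Complex.I)⁻¹) • (u - 1) with hwdef
  have hqw : D (pm w (cst b)) (cst (σ c) * H) = 0 := by
    rw [hwdef, qlin_smul, qlin_sub, hqu, hq1, sub_zero, mul_zero]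
  set δ : C(X, ℂ) := w - cplx ψ with hδdef
  have hψeq : cplx ψ = w - δ := by rw [hδdef]; ring
  have htne : (t : ℂ) ≠ 0 := Complex.ofReal_ne_zero.mpr ht0.ne'
  have hδnorm : ‖δ‖ ≤ t * ‖ψ‖ ^ 2 := by
    refine (ContinuousMap.norm_le _ (by positivity)).mpr fun x => ?_
    set z : ℂ := ((t * ψ x : ℝ) : ℂ) * Complex.I with hz
    have habsz : ‖z‖ = t * |ψ x| := by
      rw [hz, norm_mul, Complex.norm_real, Complex.norm_I, mul_one, Real.norm_eq_abs, abs_mul,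
        abs_of_pos ht0]
    have hψx : |ψ x| ≤ ‖ψ‖ := by
      have := ψ.norm_coe_le_norm x
      rwa [Real.norm_eq_abs] at this
    have hz1 : ‖z‖ ≤ 1 := by
      rw [habsz]
      calc t * |ψ x| ≤ t * ‖ψ‖ := mul_le_mul_of_nonneg_left hψx ht0.le
        _ ≤ 1 := ht1
    have hkey := Complex.norm_exp_sub_one_sub_id_le hz1
    have hzval : ((t : ℂ) * Complex.I)⁻¹ * z = (ψ x : ℂ) := by
      rw [hz]
      push_cast
      field_simp
    have hδx : δ x = ((t : ℂ) * Complex.I)⁻¹ * (Complex.exp z - 1 - z) := by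
      have h1 : δ x = ((t : ℂ) * Complex.I)⁻¹ * (u x - 1) - (ψ x : ℂ) := by
        simp [hδdef, hwdef]
      rw [h1, ← hzval, huapp x, ← hz]
      ring
    have hnorminv : ‖((t : ℂ) * Complex.I)⁻¹‖ = t⁻¹ := by
      rw [norm_inv, norm_mul, Complex.norm_I, mul_one, Complex.norm_real,
        Real.norm_eq_abs, abs_of_pos ht0]
    calc ‖δ x‖ = ‖((t : ℂ) * Complex.I)⁻¹‖ * ‖Complex.exp z - 1 - z‖ := by
          rw [hδx, norm_mul]
      _ ≤ t⁻¹ * ‖z‖ ^ 2 := by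
          rw [hnorminv]
          gcongr
      _ ≤ t⁻¹ * (t * ‖ψ‖) ^ 2 := by
          gcongr
          rw [habsz]
          exact mul_le_mul_of_nonneg_left hψx ht0.le
      _ = t * ‖ψ‖ ^ 2 := by
          field_simp
  have hqψ : D (pm (cplx ψ) (cst b)) (cst (σ c) * H)
      = - D (pm δ (cst b)) (cst (σ c) * H) := by
    rw [hψeq, qlin_sub, hqw, zero_sub]
  rw [hqψ, norm_neg]
  calc ‖D (pm δ (cst b)) (cst (σ c) * H)‖
      ≤ MD * ‖b‖ * ‖σ c‖ * ‖H‖ * ‖δ‖ := qbound (σ := σ) MD hMD hDb b c δ H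
    _ = B * ‖δ‖ := by rw [hB]
    _ ≤ B * (t * ‖ψ‖ ^ 2) := mul_le_mul_of_nonneg_left hδnorm hB0
    _ = B * ‖ψ‖ ^ 2 * t := by ring
    _ ≤ ε := ht2

lemma qzero (hcomm : ∀ a b : A, a * b = b * a)
    (hσt : ∀ (f : C(X, A)) (x : X), σt f x = σ (f x))
    (hD : ∀ a b x, D (a * b) x = D a (σt b * x) + D b (x * σt a))
    (hZc : ∀ (a : A) (H : C(X, A)), D (cst a) H = 0)
    (MD : ℝ) (hMD : 0 ≤ MD)
    (hDb : ∀ F G : C(X, A), ‖D F G‖ ≤ MD * ‖F‖ * ‖G‖)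
    (b c : A) (φ : C(X, ℂ)) (H : C(X, A)) :
    D (pm φ (cst b)) (cst (σ c) * H) = 0 := by
  set ψr : C(X, ℝ) := ⟨fun x => (φ x).re, Complex.continuous_re.comp (map_continuous φ)⟩
  set ψi : C(X, ℝ) := ⟨fun x => (φ x).im, Complex.continuous_im.comp (map_continuous φ)⟩
  have hφ : φ = cplx ψr + Complex.I • cplx ψi := by
    ext x
    simp only [ContinuousMap.add_apply, ContinuousMap.smul_apply, cplx_apply,
      smul_eq_mul, ContinuousMap.coe_mk]
    rw [mul_comm]
    exact (Complex.re_add_im (φ x)).symm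
  rw [hφ, qlin_add, qlin_smul, qreal hcomm hσt hD hZc MD hMD hDb,
    qreal hcomm hσt hD hZc MD hMD hDb, mul_zero, add_zero]


lemma FIN1
    (hkey : ∀ d : A →L[ℂ] A →L[ℂ] ℂ,
      (∀ a b x, d (a * b) x = d a (σ b * x) + d b (x * σ a)) → ∀ a x, d a x = 0)
    (hcomm : ∀ a b : A, a * b = b * a)
    (hσt : ∀ (f : C(X, A)) (x : X), σt f x = σ (f x))
    (hD : ∀ a b x, D (a * b) x = D a (σt b * x) + D b (x * σt a))
    (hZc : ∀ (a : A) (H : C(X, A)), D (cst a) H = 0)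
    (MD : ℝ) (hMD : 0 ≤ MD)
    (hDb : ∀ F G : C(X, A), ‖D F G‖ ≤ MD * ‖F‖ * ‖G‖)
    (φ : C(X, ℂ)) (b : A) (H : C(X, A)) :
    D (pm φ (cst b)) H = 0 := by
  set T : A →L[ℂ] ℂ := ((D.comp ((pmL φ).comp cstL)).flip) H with hT
  have hTapp : ∀ a : A, T a = D (pm φ (cst a)) H := fun a => rfl
  have hTprod : ∀ c c' : A, T (c * c') = 0 := by
    intro c c'
    rw [hTapp]
    have hsplit : pm φ (cst (c * c')) = pm φ (cst c) * cst c' := by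
      ext x
      simp only [pm_apply, cst_apply, ContinuousMap.mul_apply]
      rw [smul_mul_assoc]
    rw [hsplit, E2 hcomm hσt hD hZc]
    exact qzero hcomm hσt hD hZc MD hMD hDb c c' φ H
  have h := prodZero hkey T hTprod b
  rwa [hTapp] at h

end Q2

end Stmt19Aux

/-- let `X` be a compact Hausdorff space, `A` a commutative
Banach algebra and `σ ∈ Hom(A)` with dense range. If `A` is `σ`-weakly
amenable, then `C(X,A)` is `σ̃`-weakly amenable, where `σ̃ f = σ ∘ f`. -/
theorem stmt19 {X A : Type u} [TopologicalSpace X] [CompactSpace X] [T2Space X]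
    [NonUnitalNormedRing A] [NormedSpace ℂ A] [IsScalarTower ℂ A A]
    [SMulCommClass ℂ A A] [CompleteSpace A]
    (hcomm : ∀ a b : A, a * b = b * a)
    (σ : A →L[ℂ] A) (hσ : ∀ a b : A, σ (a * b) = σ a * σ b)
    (hdense : DenseRange σ) (hwa : SigmaWeaklyAmenable A σ)
    (σt : C(X, A) →L[ℂ] C(X, A)) (hσt : ∀ (f : C(X, A)) (x : X), σt f x = σ (f x)) :
    SigmaWeaklyAmenable C(X, A) σt := by
  intro D hD
  have hkey : ∀ d : A →L[ℂ] A →L[ℂ] ℂ,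
      (∀ a b x, d (a * b) x = d a (σ b * x) + d b (x * σ a)) → ∀ a x, d a x = 0 := by
    intro d hd a x
    obtain ⟨Λ, hΛ⟩ := hwa d hd
    rw [hΛ a x, hcomm (σ a) x, sub_self]
  have hDb : ∀ F G : C(X, A), ‖D F G‖ ≤ ‖D‖ * ‖F‖ * ‖G‖ := fun F G => D.le_opNorm₂ F G
  have hZ : ∀ (g : C(X, A)) (a b : A),
      D (Stmt19Aux.cst a) (Stmt19Aux.cst b * g) = 0 :=
    fun g a b => Stmt19Aux.lemZ hcomm hσt hD hkey g a b
  have hZpm : ∀ (a : A) (φ : C(X, ℂ)) (c : A),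
      D (Stmt19Aux.cst a) (Stmt19Aux.pm φ (Stmt19Aux.cst c)) = 0 := by
    intro a φ c
    set T : A →L[ℂ] ℂ := (D (Stmt19Aux.cst a)).comp
      ((Stmt19Aux.pmL φ).comp Stmt19Aux.cstL) with hT
    have hTapp : ∀ c : A, T c = D (Stmt19Aux.cst a) (Stmt19Aux.pm φ (Stmt19Aux.cst c)) :=
      fun _ => rfl
    have hTprod : ∀ b c' : A, T (b * c') = 0 := by
      intro b c'
      rw [hTapp]
      have hsplit : Stmt19Aux.pm φ (Stmt19Aux.cst (b * c'))
          = Stmt19Aux.cst b * Stmt19Aux.pm φ (Stmt19Aux.cst c') := by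
        ext x
        simp only [Stmt19Aux.pm_apply, Stmt19Aux.cst_apply, ContinuousMap.mul_apply]
        rw [mul_smul_comm]
      rw [hsplit]
      exact hZ _ a b
    have h := Stmt19Aux.prodZero hkey T hTprod c
    rwa [hTapp] at h
  have hZc : ∀ (a : A) (H : C(X, A)), D (Stmt19Aux.cst a) H = 0 := fun a H =>
    Stmt19Aux.dense_pm (D (Stmt19Aux.cst a)) (fun φ b => hZpm a φ b) H
  have hFIN1 : ∀ (φ : C(X, ℂ)) (b : A) (H : C(X, A)),
      D (Stmt19Aux.pm φ (Stmt19Aux.cst b)) H = 0 :=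
    fun φ b H => Stmt19Aux.FIN1 hkey hcomm hσt hD hZc ‖D‖ (norm_nonneg D) hDb φ b H
  have hall : ∀ f g : C(X, A), D f g = 0 := by
    intro f g
    exact Stmt19Aux.dense_pm (D.flip g) (fun φ b => hFIN1 φ b g) f
  exact ⟨0, fun a x => by simp [hall]⟩
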